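/- Let α ∈ {2, 3, 4, 5, 6}. For every integer k ≥ 1, the quantity b_k = ∫_{−1/2}^{1/2} (1 − |2x|^α) cos(π(2k − 1)x) dx satisfies b_k > 0 if k is odd and b_k < 0 if k is even. -/

import Mathlib

set_option maxHeartbeats 1000000
open Real intervalIntegral


lemma sinDeriv (c x : ℝ) : HasDerivAt (fun y : ℝ => Real.sin (c*y)) (Real.cos (c*x) * c) x :=
  by simpa using ((hasDerivAt_id x).const_mul c).sin

lemma cosDeriv (c x : ℝ) : HasDerivAt (fun y : ℝ => Real.cos (c*y)) (-Real.sin (c*x) * c) x :=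
  by simpa using ((hasDerivAt_id x).const_mul c).cos

lemma intCos (c : ℝ) (hc : c ≠ 0) : ∫ x in (0:ℝ)..(1/2), Real.cos (c*x) = Real.sin (c/2)/c := by
  have h : ∀ x ∈ Set.uIcc (0:ℝ) (1/2), HasDerivAt (fun y : ℝ => Real.sin (c*y)/c) (Real.cos (c*x)) x := by
    intro x _
    simpa [mul_div_cancel_right₀ _ hc] using (sinDeriv c x).div_const c
  rw [intervalIntegral.integral_eq_sub_of_hasDerivAt h
    ((Real.continuous_cos.comp (continuous_const.mul continuous_id)).intervalIntegrable _ _)]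
  norm_num [mul_one_div]

lemma intSin (c : ℝ) (hc : c ≠ 0) : ∫ x in (0:ℝ)..(1/2), Real.sin (c*x) = (1 - Real.cos (c/2))/c := by
  have h : ∀ x ∈ Set.uIcc (0:ℝ) (1/2), HasDerivAt (fun y : ℝ => -(Real.cos (c*y))/c) (Real.sin (c*x)) x := by
    intro x _
    have := ((cosDeriv c x).neg).div_const c
    simpa [mul_div_cancel_right₀ _ hc, neg_neg] using this
  rw [intervalIntegral.integral_eq_sub_of_hasDerivAt h
    ((Real.continuous_sin.comp (continuous_const.mul continuous_id)).intervalIntegrable _ _)]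
  field_simp
  rw [mul_zero, Real.cos_zero]; ring

lemma contPow (n : ℕ) (c : ℝ) (g : ℝ → ℝ) (hg : Continuous g) :
    Continuous (fun x : ℝ => x ^ n * g (c * x)) :=
  (continuous_pow n).mul (hg.comp (continuous_const.mul continuous_id))

lemma partsC (c : ℝ) (hc : c ≠ 0) (n : ℕ) :
    ∫ x in (0:ℝ)..(1/2), x^(n+1) * Real.cos (c*x)
      = (1/2:ℝ)^(n+1) * Real.sin (c/2) / c
        - ((n+1 : ℝ)/c) * ∫ x in (0:ℝ)..(1/2), x^n * Real.sin (c*x) := by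
  have hu : ∀ x ∈ Set.uIcc (0:ℝ) (1/2), HasDerivAt (fun y : ℝ => y^(n+1)) (((n:ℝ)+1) * x^n) x := by
    intro x _; simpa using hasDerivAt_pow (n+1) x
  have hv : ∀ x ∈ Set.uIcc (0:ℝ) (1/2), HasDerivAt (fun y : ℝ => Real.sin (c*y)/c) (Real.cos (c*x)) x := by
    intro x _
    simpa [mul_div_cancel_right₀ _ hc] using (sinDeriv c x).div_const c
  have key := intervalIntegral.integral_mul_deriv_eq_deriv_mul hu hv
    (((continuous_const.mul (continuous_pow n))).intervalIntegrable _ _)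
    ((Real.continuous_cos.comp (continuous_const.mul continuous_id)).intervalIntegrable _ _)
  rw [key]
  have h2 : ∫ x in (0:ℝ)..(1/2), ((n:ℝ)+1) * x^n * (Real.sin (c*x)/c)
      = ((n+1 : ℝ)/c) * ∫ x in (0:ℝ)..(1/2), x^n * Real.sin (c*x) := by
    rw [← intervalIntegral.integral_const_mul]
    apply intervalIntegral.integral_congr
    intro x _
    ring
  rw [h2]
  have : c * (1/2 : ℝ) = c/2 := by ring
  rw [this]
  ring

lemma partsS (c : ℝ) (hc : c ≠ 0) (n : ℕ) :
    ∫ x in (0:ℝ)..(1/2), x^(n+1) * Real.sin (c*x)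
      = -((1/2:ℝ)^(n+1) * Real.cos (c/2) / c)
        + ((n+1 : ℝ)/c) * ∫ x in (0:ℝ)..(1/2), x^n * Real.cos (c*x) := by
  have hu : ∀ x ∈ Set.uIcc (0:ℝ) (1/2), HasDerivAt (fun y : ℝ => y^(n+1)) (((n:ℝ)+1) * x^n) x := by
    intro x _; simpa using hasDerivAt_pow (n+1) x
  have hv : ∀ x ∈ Set.uIcc (0:ℝ) (1/2), HasDerivAt (fun y : ℝ => -(Real.cos (c*y))/c) (Real.sin (c*x)) x := by
    intro x _
    simpa [mul_div_cancel_right₀ _ hc, neg_neg] using ((cosDeriv c x).neg).div_const c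
  have key := intervalIntegral.integral_mul_deriv_eq_deriv_mul hu hv
    (((continuous_const.mul (continuous_pow n))).intervalIntegrable _ _)
    ((Real.continuous_sin.comp (continuous_const.mul continuous_id)).intervalIntegrable _ _)
  rw [key]
  have h2 : ∫ x in (0:ℝ)..(1/2), ((n:ℝ)+1) * x^n * (-(Real.cos (c*x))/c)
      = -(((n+1 : ℝ)/c) * ∫ x in (0:ℝ)..(1/2), x^n * Real.cos (c*x)) := by
    rw [← intervalIntegral.integral_const_mul, ← intervalIntegral.integral_neg]
    apply intervalIntegral.integral_congr
    intro x _
    ring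
  rw [h2]
  have : c * (1/2 : ℝ) = c/2 := by ring
  rw [this]
  ring

lemma splitInt (c : ℝ) (n : ℕ) :
    (∫ x in (0:ℝ)..(1/2), (1-(2*x)^n) * Real.cos (c*x))
      = (∫ x in (0:ℝ)..(1/2), Real.cos (c*x))
        - 2^n * ∫ x in (0:ℝ)..(1/2), x^n * Real.cos (c*x) := by
  have e : (∫ x in (0:ℝ)..(1/2), (1-(2*x)^n) * Real.cos (c*x))
      = ∫ x in (0:ℝ)..(1/2), (Real.cos (c*x) - 2^n * (x^n * Real.cos (c*x))) := by
    apply intervalIntegral.integral_congr; intro x _; ring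
  have i1 : IntervalIntegrable (fun x : ℝ => Real.cos (c*x)) MeasureTheory.volume 0 (1/2) :=
    (Real.continuous_cos.comp (continuous_const.mul continuous_id)).intervalIntegrable _ _
  have i2 : IntervalIntegrable (fun x : ℝ => (2:ℝ)^n * (x^n * Real.cos (c*x))) MeasureTheory.volume 0 (1/2) :=
    (continuous_const.mul (contPow n c _ Real.continuous_cos)).intervalIntegrable _ _
  rw [e, intervalIntegral.integral_sub i1 i2, intervalIntegral.integral_const_mul]

lemma vals (c s : ℝ) (hc : c ≠ 0) (h0 : Real.cos (c/2) = 0) (h1 : Real.sin (c/2) = s) :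
    (∫ x in (0:ℝ)..(1/2), (1-(2*x)^2) * Real.cos (c*x)) = 8*s/c^3 ∧
    (∫ x in (0:ℝ)..(1/2), (1-(2*x)^3) * Real.cos (c*x)) = 24*s/c^3 - 48/c^4 ∧
    (∫ x in (0:ℝ)..(1/2), (1-(2*x)^4) * Real.cos (c*x)) = 48*s/c^3 - 384*s/c^5 ∧
    (∫ x in (0:ℝ)..(1/2), (1-(2*x)^5) * Real.cos (c*x)) = 80*s/c^3 - 1920*s/c^5 + 3840/c^6 ∧
    (∫ x in (0:ℝ)..(1/2), (1-(2*x)^6) * Real.cos (c*x)) = 120*s/c^3 - 5760*s/c^5 + 46080*s/c^7 := by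
  have S0 : (∫ x in (0:ℝ)..(1/2), Real.sin (c*x)) = 1/c := by rw [intSin c hc, h0]; ring
  have C0 : (∫ x in (0:ℝ)..(1/2), Real.cos (c*x)) = s/c := by rw [intCos c hc, h1]
  have C1 : (∫ x in (0:ℝ)..(1/2), x * Real.cos (c*x)) = s/(2*c) - 1/c^2 := by
    have h := partsC c hc 0; norm_num [h1] at h; rw [S0] at h; rw [h]; ring
  have S1 : (∫ x in (0:ℝ)..(1/2), x * Real.sin (c*x)) = s/c^2 := by
    have h := partsS c hc 0; norm_num [h0] at h; rw [C0] at h; rw [h]; ring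
  have C2 : (∫ x in (0:ℝ)..(1/2), x^2 * Real.cos (c*x)) = s/(4*c) - 2*s/c^3 := by
    have h := partsC c hc 1; norm_num [h1] at h; rw [S1] at h; rw [h]; ring
  have S2 : (∫ x in (0:ℝ)..(1/2), x^2 * Real.sin (c*x)) = s/c^2 - 2/c^3 := by
    have h := partsS c hc 1; norm_num [h0] at h; rw [C1] at h; rw [h]; ring
  have C3 : (∫ x in (0:ℝ)..(1/2), x^3 * Real.cos (c*x)) = s/(8*c) - 3*s/c^3 + 6/c^4 := by
    have h := partsC c hc 2; norm_num [h1] at h; rw [S2] at h; rw [h]; ring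
  have S3 : (∫ x in (0:ℝ)..(1/2), x^3 * Real.sin (c*x)) = 3*s/(4*c^2) - 6*s/c^4 := by
    have h := partsS c hc 2; norm_num [h0] at h; rw [C2] at h; rw [h]; ring
  have C4 : (∫ x in (0:ℝ)..(1/2), x^4 * Real.cos (c*x)) = s/(16*c) - 3*s/c^3 + 24*s/c^5 := by
    have h := partsC c hc 3; norm_num [h1] at h; rw [S3] at h; rw [h]; ring
  have S4 : (∫ x in (0:ℝ)..(1/2), x^4 * Real.sin (c*x)) = s/(2*c^2) - 12*s/c^4 + 24/c^5 := by
    have h := partsS c hc 3; norm_num [h0] at h; rw [C3] at h; rw [h]; ring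
  have C5 : (∫ x in (0:ℝ)..(1/2), x^5 * Real.cos (c*x)) = s/(32*c) - 5*s/(2*c^3) + 60*s/c^5 - 120/c^6 := by
    have h := partsC c hc 4; norm_num [h1] at h; rw [S4] at h; rw [h]; ring
  have S5 : (∫ x in (0:ℝ)..(1/2), x^5 * Real.sin (c*x)) = 5*s/(16*c^2) - 15*s/c^4 + 120*s/c^6 := by
    have h := partsS c hc 4; norm_num [h0] at h; rw [C4] at h; rw [h]; ring
  have C6 : (∫ x in (0:ℝ)..(1/2), x^6 * Real.cos (c*x)) = s/(64*c) - 15*s/(8*c^3) + 90*s/c^5 - 720*s/c^7 := by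
    have h := partsC c hc 5; norm_num [h1] at h; rw [S5] at h; rw [h]; ring
  refine ⟨?_, ?_, ?_, ?_, ?_⟩ <;> rw [splitInt, C0]
  · rw [C2]; field_simp; ring
  · rw [C3]; field_simp; ring
  · rw [C4]; field_simp; ring
  · rw [C5]; field_simp; ring
  · rw [C6]; field_simp; ring

lemma evenRed (n : ℕ) (c : ℝ) :
    (∫ x in (-(1/2):ℝ)..(1/2), (1 - |2*x|^n) * Real.cos (c*x))
      = 2 * ∫ x in (0:ℝ)..(1/2), (1-(2*x)^n) * Real.cos (c*x) := by
  have hcont : Continuous (fun x : ℝ => (1 - |2*x|^n) * Real.cos (c*x)) :=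
    (continuous_const.sub (((continuous_const.mul continuous_id).abs).pow n)).mul
      (Real.continuous_cos.comp (continuous_const.mul continuous_id))
  have hadd : (∫ x in (-(1/2):ℝ)..(0:ℝ), (1 - |2*x|^n) * Real.cos (c*x))
      + (∫ x in (0:ℝ)..(1/2), (1 - |2*x|^n) * Real.cos (c*x))
      = ∫ x in (-(1/2):ℝ)..(1/2), (1 - |2*x|^n) * Real.cos (c*x) :=
    intervalIntegral.integral_add_adjacent_intervals
      (hcont.intervalIntegrable _ _) (hcont.intervalIntegrable _ _)
  have hneg : (∫ x in (-(1/2):ℝ)..(0:ℝ), (1 - |2*x|^n) * Real.cos (c*x))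
      = ∫ x in (0:ℝ)..(1/2), (1 - |2*x|^n) * Real.cos (c*x) := by
    have h1 : (∫ x in (0:ℝ)..(1/2), (1 - |2*(-x)|^n) * Real.cos (c*(-x)))
        = ∫ x in (-(1/2):ℝ)..(-0:ℝ), (1 - |2*x|^n) * Real.cos (c*x) :=
      intervalIntegral.integral_comp_neg (fun y : ℝ => (1 - |2*y|^n) * Real.cos (c*y))
    rw [neg_zero] at h1
    rw [← h1]
    apply intervalIntegral.integral_congr
    intro x _
    dsimp only
    rw [show (2:ℝ)*(-x) = -(2*x) by ring, abs_neg, show c*(-x) = -(c*x) by ring, Real.cos_neg]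
  have hhalf : (∫ x in (0:ℝ)..(1/2), (1 - |2*x|^n) * Real.cos (c*x))
      = ∫ x in (0:ℝ)..(1/2), (1-(2*x)^n) * Real.cos (c*x) := by
    apply intervalIntegral.integral_congr
    intro x hx
    rw [Set.uIcc_of_le (by norm_num)] at hx
    dsimp only
    rw [abs_of_nonneg (by nlinarith [hx.1] : (0:ℝ) ≤ 2*x)]
  rw [← hadd, hneg, hhalf]
  ring

/-- For `α ∈ {2,3,4,5,6}` and every integer `k ≥ 1`, the quantity
`b_k = ∫_{-1/2}^{1/2} (1-|2x|^α) cos(π(2k-1)x) dx` is positive for odd `k` and negative for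
even `k`. -/
theorem stmt12 (α : ℝ) (hα : α ∈ ({2, 3, 4, 5, 6} : Set ℝ)) (k : ℕ) (hk : 1 ≤ k) :
    (Odd k →
      0 < ∫ x in (-(1 / 2) : ℝ)..(1 / 2), (1 - |2 * x| ^ α) * Real.cos (π * (2 * (k : ℝ) - 1) * x)) ∧
    (Even k →
      (∫ x in (-(1 / 2) : ℝ)..(1 / 2), (1 - |2 * x| ^ α) * Real.cos (π * (2 * (k : ℝ) - 1) * x)) < 0) := by
  simp only [Set.mem_insert_iff, Set.mem_singleton_iff] at hα
  have hk1 : (1:ℝ) ≤ (k:ℝ) := by exact_mod_cast hk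
  have h21 : (1:ℝ) ≤ 2*(k:ℝ)-1 := by linarith
  set c := π * (2*(k:ℝ)-1) with hcdef
  have hcpos : 0 < c := by rw [hcdef]; nlinarith [Real.pi_pos]
  have hcne : c ≠ 0 := ne_of_gt hcpos
  have hcge : (3.141592:ℝ) ≤ c := by rw [hcdef]; nlinarith [Real.pi_gt_d6, Real.pi_pos]
  have harg : c/2 = (k:ℝ)*π - π/2 := by rw [hcdef]; push_cast; ring
  have hcos : Real.cos (c/2) = 0 := by
    rw [harg, Real.cos_nat_mul_pi_sub, Real.cos_pi_div_two, mul_zero]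
  have hsin : Real.sin (c/2) = (-1:ℝ)^(k+1) := by
    rw [harg, Real.sin_nat_mul_pi_sub, Real.sin_pi_div_two, pow_succ]; ring
  have hV := vals c ((-1:ℝ)^(k+1)) hcne hcos hsin
  have hodd1 : Odd k → ((-1:ℝ))^(k+1) = 1 := fun h => Even.neg_one_pow h.add_one
  have heven1 : Even k → ((-1:ℝ))^(k+1) = -1 := fun h => Odd.neg_one_pow (Even.add_one h)
  have heck : Even k → (9:ℝ) ≤ c := by
    intro he
    have hk2 : 2 ≤ k := by
      have := Nat.even_iff.mp he; omega
    have hk2' : (2:ℝ) ≤ (k:ℝ) := by exact_mod_cast hk2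
    rw [hcdef]; nlinarith [Real.pi_gt_d6]
  rcases hα with h|h|h|h|h
  · -- α = 2
    subst h
    have key : ∀ x : ℝ, |2*x| ^ (2:ℝ) = |2*x|^(2:ℕ) := fun x => by
      rw [show (2:ℝ) = ((2:ℕ):ℝ) by norm_num, Real.rpow_natCast]
    simp only [key]
    rw [evenRed 2 c, hV.1]
    constructor
    · intro hok; rw [hodd1 hok,
        show 2*(8*(1:ℝ)/c^3) = 16/c^3 by ring]
      exact div_pos (by norm_num) (pow_pos hcpos 3)
    · intro hek; rw [heven1 hek,
        show 2*(8*(-1:ℝ)/c^3) = (-16)/c^3 by ring]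
      exact div_neg_of_neg_of_pos (by norm_num) (pow_pos hcpos 3)
  · -- α = 3
    subst h
    have key : ∀ x : ℝ, |2*x| ^ (3:ℝ) = |2*x|^(3:ℕ) := fun x => by
      rw [show (3:ℝ) = ((3:ℕ):ℝ) by norm_num, Real.rpow_natCast]
    simp only [key]
    rw [evenRed 3 c, hV.2.1]
    constructor
    · intro hok; rw [hodd1 hok,
        show 2*(24*(1:ℝ)/c^3 - 48/c^4) = (48*c - 96)/c^4 by field_simp; ring]
      exact div_pos (by nlinarith) (pow_pos hcpos 4)
    · intro hek; rw [heven1 hek,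
        show 2*(24*(-1:ℝ)/c^3 - 48/c^4) = (-(48*c) - 96)/c^4 by field_simp; ring]
      exact div_neg_of_neg_of_pos (by nlinarith) (pow_pos hcpos 4)
  · -- α = 4
    subst h
    have key : ∀ x : ℝ, |2*x| ^ (4:ℝ) = |2*x|^(4:ℕ) := fun x => by
      rw [show (4:ℝ) = ((4:ℕ):ℝ) by norm_num, Real.rpow_natCast]
    simp only [key]
    rw [evenRed 4 c, hV.2.2.1]
    constructor
    · intro hok; rw [hodd1 hok,
        show 2*(48*(1:ℝ)/c^3 - 384*1/c^5) = (96*c^2 - 768)/c^5 by field_simp; ring]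
      exact div_pos (by nlinarith) (pow_pos hcpos 5)
    · intro hek; rw [heven1 hek,
        show 2*(48*(-1:ℝ)/c^3 - 384*(-1)/c^5) = (-(96*c^2) + 768)/c^5 by field_simp; ring]
      exact div_neg_of_neg_of_pos (by nlinarith) (pow_pos hcpos 5)
  · -- α = 5
    subst h
    have key : ∀ x : ℝ, |2*x| ^ (5:ℝ) = |2*x|^(5:ℕ) := fun x => by
      rw [show (5:ℝ) = ((5:ℕ):ℝ) by norm_num, Real.rpow_natCast]
    simp only [key]
    rw [evenRed 5 c, hV.2.2.2.1]
    constructor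
    · intro hok; rw [hodd1 hok,
        show 2*(80*(1:ℝ)/c^3 - 1920*1/c^5 + 3840/c^6) = (160*c^3 - 3840*c + 7680)/c^6 by
          field_simp; ring]
      refine div_pos ?_ (pow_pos hcpos 6)
      nlinarith [hcge, sq_nonneg (c - 3.141592),
        mul_nonneg (sub_nonneg.2 hcge) (sq_nonneg (c - 3.141592))]
    · intro hek
      have h9 := heck hek
      rw [heven1 hek,
        show 2*(80*(-1:ℝ)/c^3 - 1920*(-1)/c^5 + 3840/c^6) = (-(160*c^3) + 3840*c + 7680)/c^6 by
          field_simp; ring]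
      refine div_neg_of_neg_of_pos ?_ (pow_pos hcpos 6)
      nlinarith [h9, sq_nonneg (c - 9), mul_nonneg (sub_nonneg.2 h9) (sq_nonneg (c - 9))]
  · -- α = 6
    subst h
    have key : ∀ x : ℝ, |2*x| ^ (6:ℝ) = |2*x|^(6:ℕ) := fun x => by
      rw [show (6:ℝ) = ((6:ℕ):ℝ) by norm_num, Real.rpow_natCast]
    simp only [key]
    rw [evenRed 6 c, hV.2.2.2.2]
    constructor
    · intro hok
      rw [hodd1 hok,
        show 2*(120*(1:ℝ)/c^3 - 5760*1/c^5 + 46080*1/c^7)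
            = (240*c^4 - 11520*c^2 + 92160)/c^7 by field_simp; ring]
      refine div_pos ?_ (pow_pos hcpos 7)
      rcases Nat.lt_or_ge k 2 with hk2 | hk2
      · have hk1' : k = 1 := by omega
        have hcp : c = π := by rw [hcdef, hk1']; norm_num
        have hπ2 : π^2 < 9.9225 := by nlinarith [Real.pi_lt_d2, Real.pi_pos]
        rw [hcp]
        nlinarith [hπ2, sq_nonneg (Real.pi^2 - 9.9225), Real.pi_gt_d6, Real.pi_pos,
          sq_nonneg Real.pi]
      · have hk3 : 3 ≤ k := by
          have := Nat.odd_iff.mp hok; omega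
        have hk3' : (3:ℝ) ≤ (k:ℝ) := by exact_mod_cast hk3
        have hc15 : (15:ℝ) ≤ c := by rw [hcdef]; nlinarith [Real.pi_gt_d6]
        nlinarith [hc15, hcpos, sq_nonneg c, mul_nonneg (sub_nonneg.2 hc15) (sub_nonneg.2 hc15)]
    · intro hek
      have h9 := heck hek
      rw [heven1 hek,
        show 2*(120*(-1:ℝ)/c^3 - 5760*(-1)/c^5 + 46080*(-1)/c^7)
            = (-(240*c^4) + 11520*c^2 - 92160)/c^7 by field_simp; ring]
      refine div_neg_of_neg_of_pos ?_ (pow_pos hcpos 7)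
      nlinarith [h9, hcpos, sq_nonneg c, mul_nonneg (sub_nonneg.2 h9) (sub_nonneg.2 h9)]
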